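/- Let X be a Banach space and U a bounded subset of X. Then λ(convexHull(U)) = λ(U), i.e., the Hausdorff measure of noncompactness of the convex hull of U equals that of U. -/

import Mathlib

open Pointwise

/-- The Hausdorff measure of noncompactness of a subset `U` of a normed space:
the infimum of all `α > 0` such that `U` can be covered by finitely many open
balls of radius smaller than `α`. -/
noncomputable def hausdorffMNC {X : Type*} [NormedAddCommGroup X] (U : Set X) : ℝ :=
  sInf {α : ℝ | 0 < α ∧ ∃ (n : ℕ) (c : Fin n → X) (r : Fin n → ℝ),
    (∀ i, r i < α) ∧ U ⊆ ⋃ i, Metric.ball (c i) (r i)}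

theorem hausdorffMNC_set_eq {X : Type*} [NormedAddCommGroup X]
    [NormedSpace ℝ X] (U : Set X) :
    {α : ℝ | 0 < α ∧ ∃ (n : ℕ) (c : Fin n → X) (r : Fin n → ℝ),
      (∀ i, r i < α) ∧ (convexHull ℝ U) ⊆ ⋃ i, Metric.ball (c i) (r i)} =
    {α : ℝ | 0 < α ∧ ∃ (n : ℕ) (c : Fin n → X) (r : Fin n → ℝ),
      (∀ i, r i < α) ∧ U ⊆ ⋃ i, Metric.ball (c i) (r i)} := by
  ext α
  constructor
  · rintro ⟨hα, n, c, r, hr, hsub⟩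
    exact ⟨hα, n, c, r, hr, (subset_convexHull ℝ U).trans hsub⟩
  · rintro ⟨hα, n, c, r, hr, hsub⟩
    refine ⟨hα, ?_⟩
    rcases Nat.eq_zero_or_pos n with rfl | hn
    · have hUe : U = ∅ := by
        simpa [Set.iUnion_of_empty] using hsub
      refine ⟨0, Fin.elim0, Fin.elim0, fun i => i.elim0, ?_⟩
      simp [hUe]
    · -- maximum of radii
      haveI : Nonempty (Fin n) := Fin.pos_iff_nonempty.mp hn
      have hne : (Finset.univ : Finset (Fin n)).Nonempty := Finset.univ_nonempty
      set M : ℝ := Finset.univ.sup' hne r with hM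
      have hMle : ∀ i, r i ≤ M := fun i => Finset.le_sup' r (Finset.mem_univ i)
      have hMα : M < α := by
        rw [hM, Finset.sup'_lt_iff]
        exact fun i _ => hr i
      set ε : ℝ := (α - M) / 2 with hε
      have hεpos : 0 < ε := by
        have : M < α := hMα
        simp only [hε]; linarith
      -- convex hull of centers
      set K : Set X := convexHull ℝ (Set.range c) with hK
      have hKc : IsCompact K := (Set.finite_range c).isCompact_convexHull (𝕜 := ℝ)
      -- U ⊆ K + ball 0 M
      have hUA : U ⊆ K + Metric.ball (0 : X) M := by
        intro x hx
        obtain ⟨i, hi⟩ := Set.mem_iUnion.mp (hsub hx)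
        refine ⟨c i, subset_convexHull ℝ _ ⟨i, rfl⟩, x - c i, ?_, by abel_nf⟩
        rw [Metric.mem_ball, dist_zero_right]
        calc ‖x - c i‖ < r i := by
              simpa [dist_eq_norm] using hi
          _ ≤ M := hMle i
      have hconvA : Convex ℝ (K + Metric.ball (0 : X) M) :=
        (convex_convexHull ℝ _).add (convex_ball 0 M)
      have hCU : convexHull ℝ U ⊆ K + Metric.ball (0 : X) M :=
        convexHull_min hUA hconvA
      -- cover K by finitely many ε-balls
      obtain ⟨t, htfin, htsub⟩ := Metric.totallyBounded_iff.mp hKc.totallyBounded ε hεpos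
      obtain ⟨m, f, hf⟩ := htfin.fin_embedding
      refine ⟨m, f, fun _ => ε + M, fun i => by simp only [hε]; linarith, ?_⟩
      intro x hx
      obtain ⟨k, hk, b, hb, rfl⟩ := hCU hx
      obtain ⟨y, hy, hky⟩ := Set.mem_iUnion₂.mp (htsub hk)
      rw [← hf] at hy
      obtain ⟨j, rfl⟩ := hy
      refine Set.mem_iUnion.mpr ⟨j, ?_⟩
      rw [Metric.mem_ball, dist_eq_norm]
      have h1 : ‖k - f j‖ < ε := by simpa [dist_eq_norm] using hky
      have h2 : ‖b‖ < M := by simpa [dist_eq_norm] using hb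
      calc ‖k + b - f j‖ = ‖(k - f j) + b‖ := by rw [add_sub_right_comm]
        _ ≤ ‖k - f j‖ + ‖b‖ := norm_add_le _ _
        _ < ε + M := by linarith

/-- The Hausdorff measure of noncompactness of the convex hull of a bounded set
equals that of the set itself. -/
theorem hausdorffMNC_convexHull {X : Type*} [NormedAddCommGroup X]
    [NormedSpace ℝ X] [CompleteSpace X]
    (U : Set X) (hU : Bornology.IsBounded U) :
    hausdorffMNC (convexHull ℝ U) = hausdorffMNC U := by
  unfold hausdorffMNC
  rw [hausdorffMNC_set_eq]
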